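/- Let q ∈ (0,1) and specialize a_n = q^{−2(n+1)}(1 − q^{n+1}) and k = q^{1/2}, so that α_n = q^{−2n−3/2}(1−q^{n+1}) and β_n = q^{−2(n+1)}(1 − q^{n+1} + q³(1 − q^n)). Then the orthonormal polynomials P_n defined by the three-term recurrence satisfy P_n(x) = (−1)^n q^{−n/2} L̃_n(x;q) for every n ≥ 0, as an identity of polynomials in x. -/

import Mathlib

open scoped BigOperators

/-- The q-Pochhammer symbol `(w;q)_r = ∏_{i=0}^{r−1} (1 − q^i w)` (real version). -/
noncomputable def qPR (q w : ℝ) (r : ℕ) : ℝ := ∏ i ∈ Finset.range r, (1 - q ^ i * w)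

/-- The q-Laguerre polynomial
`L_n^{(α)}(x;q) = ((q^{α+1};q)_n/(q;q)_n) ₁φ₁(q^{−n}; q^{α+1}; q, −q^{n+α+1} x)`,
where `₁φ₁(a;b;q,z) = Σ_j ((a;q)_j/((b;q)_j (q;q)_j)) (−1)^j q^{j(j−1)/2} z^j`;
for `a = q^{−n}` the terms with `j > n` vanish, so the series is the finite sum below. -/
noncomputable def qLaguerre (q : ℝ) (α : ℕ) (n : ℕ) (x : ℝ) : ℝ :=
  (qPR q (q ^ (α + 1)) n / qPR q q n) *
    ∑ j ∈ Finset.range (n + 1),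
      qPR q ((q ^ n)⁻¹) j / (qPR q (q ^ (α + 1)) j * qPR q q j) *
        ((-1) ^ j * q ^ (j * (j - 1) / 2) * (-(q ^ (n + α + 1) * x)) ^ j)

/-- The modified q-Laguerre polynomial
`L̃_n(x;q) = q^{n+1} L_n^{(0)}(x;q) + (1−q) L_n^{(1)}(x;q)`. -/
noncomputable def qLaguerreMod (q : ℝ) (n : ℕ) (x : ℝ) : ℝ :=
  q ^ (n + 1) * qLaguerre q 0 n x + (1 - q) * qLaguerre q 1 n x

noncomputable def alph (a : ℕ → ℝ) (k : ℝ) (n : ℕ) : ℝ := k * a n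

noncomputable def bet (a : ℕ → ℝ) (k : ℝ) : ℕ → ℝ
  | 0 => a 0
  | n + 1 => a (n + 1) + k ^ 2 * a n

/-- The specialization `a_n = q^{−2(n+1)}(1 − q^{n+1})` of the sequence `a`. -/
noncomputable def aQ (q : ℝ) (n : ℕ) : ℝ := q ^ (-(2 : ℝ) * ((n : ℝ) + 1)) * (1 - q ^ (n + 1))

open Finset




noncomputable def gP (q : ℝ) (n j : ℕ) : ℝ := ∏ i ∈ Finset.range j, (1 - q ^ n * (q ^ i)⁻¹)

noncomputable def DD (q : ℝ) (n j : ℕ) : ℝ :=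
  (-1)^j * (q ^ (j*(j-1)/2))^2 * q^j * gP q n j *
    ((q^j*(1-q) + q^(n+1)*(1-q^j)) / (qPR q q j * qPR q q (j+1)))

noncomputable def aN (q : ℝ) (n : ℕ) : ℝ := (1 - q^(n+1)) / q^(2*(n+1))

lemma tri (j : ℕ) : (j+1)*j/2 = j*(j-1)/2 + j := by
  cases j with
  | zero => rfl
  | succ m =>
    simp only [Nat.add_sub_cancel]
    rw [show (m+1+1)*(m+1) = (m+1)*m + 2*(m+1) by ring,
      Nat.add_mul_div_left _ _ (by norm_num : (0:ℕ) < 2)]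

lemma fac_pos {q : ℝ} (hq0 : 0 < q) (hq1 : q < 1) (j : ℕ) : 0 < 1 - q^j * q := by
  have h1 : q ^ j ≤ 1 := pow_le_one₀ hq0.le hq1.le
  nlinarith [pow_pos hq0 j]

lemma pP_pos {q : ℝ} (hq0 : 0 < q) (hq1 : q < 1) (j : ℕ) : 0 < qPR q q j := by
  apply Finset.prod_pos
  intro i _
  have h1 : q ^ i ≤ 1 := pow_le_one₀ hq0.le hq1.le
  nlinarith [pow_pos hq0 i]

lemma pP_succ (q : ℝ) (j : ℕ) : qPR q q (j+1) = qPR q q j * (1 - q^j * q) :=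
  Finset.prod_range_succ _ _

lemma gP_succ (q : ℝ) (n j : ℕ) : gP q n (j+1) = gP q n j * (1 - q^n * (q^j)⁻¹) :=
  Finset.prod_range_succ _ _

lemma gP_shift {q : ℝ} (hq : q ≠ 0) (n j : ℕ) :
    gP q (n+1) (j+1) = (1 - q^(n+1)) * gP q n j := by
  rw [gP, Finset.prod_range_succ']
  simp only [pow_zero, inv_one, mul_one]
  rw [mul_comm]
  congr 1
  apply Finset.prod_congr rfl
  intro i _
  congr 1
  rw [pow_succ, pow_succ, mul_inv]
  field_simp

lemma gP_eq_zero {q : ℝ} (hq : q ≠ 0) {n j : ℕ} (h : n < j) : gP q n j = 0 := by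
  apply Finset.prod_eq_zero (Finset.mem_range.mpr h)
  rw [mul_inv_cancel₀ (pow_ne_zero _ hq)]
  ring

lemma qPR_inv_pow {q : ℝ} (hq : q ≠ 0) (n j : ℕ) :
    qPR q ((q^n)⁻¹) j * q^(n*j) = (-1)^j * q^(j*(j-1)/2) * gP q n j := by
  induction j with
  | zero => simp [qPR, gP]
  | succ m ih =>
    rw [qPR, Finset.prod_range_succ, ← qPR, gP_succ, Nat.add_sub_cancel, tri m]
    have hqm : (q:ℝ)^m ≠ 0 := pow_ne_zero _ hq
    have hqn : (q:ℝ)^n ≠ 0 := pow_ne_zero _ hq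
    have key : (1 - q^m * (q^n)⁻¹) * q^n = -(q^m * (1 - q^n * (q^m)⁻¹)) := by
      field_simp
      ring
    calc qPR q ((q^n)⁻¹) m * (1 - q^m * (q^n)⁻¹) * q^(n*(m+1))
        = (qPR q ((q^n)⁻¹) m * q^(n*m)) * ((1 - q^m * (q^n)⁻¹) * q^n) := by
          rw [Nat.mul_succ, pow_add]; ring
      _ = ((-1)^m * q^(m*(m-1)/2) * gP q n m) * (-(q^m * (1 - q^n * (q^m)⁻¹))) := by
          rw [ih, key]
      _ = (-1)^(m+1) * q^(m*(m-1)/2 + m) * (gP q n m * (1 - q^n * (q^m)⁻¹)) := by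
          rw [pow_succ, pow_add]; ring

lemma qPR_sq (q : ℝ) (j : ℕ) : (1-q) * qPR q (q^2) j = qPR q q (j+1) := by
  induction j with
  | zero => simp [qPR]
  | succ m ih =>
    rw [qPR, Finset.prod_range_succ, ← qPR, pP_succ, ← ih]
    ring_nf





lemma DD_top {q : ℝ} (hq : q ≠ 0) {n j : ℕ} (h : n < j) : DD q n j = 0 := by
  simp [DD, gP_eq_zero hq h]

lemma Lmod_eq {q : ℝ} (hq0 : 0 < q) (hq1 : q < 1) (n : ℕ) (x : ℝ) :
    qLaguerreMod q n x = ∑ j ∈ Finset.range (n+1), DD q n j * x^j := by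
  have hq : q ≠ 0 := hq0.ne'
  have h1q : (1:ℝ) - q ≠ 0 := by linarith
  rw [qLaguerreMod, qLaguerre, qLaguerre, Finset.mul_sum, Finset.mul_sum,
    Finset.mul_sum, Finset.mul_sum, ← Finset.sum_add_distrib]
  apply Finset.sum_congr rfl
  intro j hj
  have hnj : (q:ℝ)^(n*j) ≠ 0 := pow_ne_zero _ hq
  have hPn := (pP_pos hq0 hq1 n).ne'
  have hPj := (pP_pos hq0 hq1 j).ne'
  have hPj1 := (pP_pos hq0 hq1 (j+1)).ne'
  have hPn1 := (pP_pos hq0 hq1 (n+1)).ne'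
  have hinv : qPR q ((q^n)⁻¹) j = ((-1)^j * q^(j*(j-1)/2) * gP q n j) / q^(n*j) :=
    (eq_div_iff hnj).mpr (qPR_inv_pow hq n j)
  have hsqn : qPR q (q^(1+1)) n = qPR q q (n+1) / (1-q) := by
    rw [eq_div_iff h1q, mul_comm]
    exact qPR_sq q n
  have hsqj : qPR q (q^(1+1)) j = qPR q q (j+1) / (1-q) := by
    rw [eq_div_iff h1q, mul_comm]
    exact qPR_sq q j
  simp only [zero_add, pow_one, Nat.add_zero, add_zero]
  have h1qj : (1:ℝ) - q^j * q ≠ 0 := (fac_pos hq0 hq1 j).ne'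
  have h1qn : (1:ℝ) - q^n * q ≠ 0 := (fac_pos hq0 hq1 n).ne'
  have h1qj' : (1:ℝ) - q * q^j ≠ 0 := by intro hc; apply h1qj; linear_combination hc
  have h1qn' : (1:ℝ) - q * q^n ≠ 0 := by intro hc; apply h1qn; linear_combination hc
  rw [DD, hinv, hsqn, hsqj, neg_pow (q^(n+1) * x), neg_pow (q^(n+1+1) * x),
    pP_succ q j, pP_succ q n]
  rcases Nat.even_or_odd j with he | ho
  · simp only [he.neg_one_pow]
    field_simp
    ring
  · simp only [ho.neg_one_pow]
    field_simp
    ring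

lemma DD_zero0 {q : ℝ} (h1q : (1:ℝ) - q ≠ 0) (n : ℕ) : DD q n 0 = 1 := by
  simp [DD, gP, qPR, Finset.prod_range_succ]
  exact h1q

lemma Lmod_eq_ext {q : ℝ} (hq0 : 0 < q) (hq1 : q < 1) (n m : ℕ) (h : n + 1 ≤ m) (x : ℝ) :
    qLaguerreMod q n x = ∑ j ∈ Finset.range m, DD q n j * x^j := by
  rw [Lmod_eq hq0 hq1]
  apply Finset.sum_subset (Finset.range_subset_range.mpr h)
  intro j hjm hjn
  rw [DD_top hq0.ne' (by simpa using hjn : n < j), zero_mul]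

lemma KEY {q : ℝ} (hq0 : 0 < q) (hq1 : q < 1) (k m : ℕ) :
    aN q (k+1) * DD q (k+2) (m+1)
      = (aN q (k+1) + q * aN q k) * DD q (k+1) (m+1) - DD q (k+1) m
        - q * aN q k * DD q k (m+1) := by
  have hq : q ≠ 0 := hq0.ne'
  rcases lt_trichotomy m (k+1) with h | h | h
  · -- m ≤ k
    obtain ⟨d, rfl⟩ : ∃ d, k = m + d := ⟨k - m, by omega⟩
    have e1 : gP q (m+d+2) (m+1) = (1 - q^(m+d+2)) * gP q (m+d+1) m := by
      have := gP_shift hq (m+d+1) m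
      simpa using this
    have e2 : gP q (m+d+1) (m+1) = (1 - q^(m+d+1)) * gP q (m+d) m := gP_shift hq (m+d) m
    have e3 : gP q (m+d) (m+1) = gP q (m+d) m * (1 - q^d) := by
      rw [gP_succ q (m+d) m]
      congr 2
      rw [pow_add]
      field_simp
    have hd1 : (1:ℝ) - q^(d+1) ≠ 0 := by
      have := fac_pos hq0 hq1 d
      intro hc
      rw [pow_succ] at hc
      linarith
    have hA : gP q (m+d+1) m = (1 - q^(m+d+1)) * gP q (m+d) m / (1 - q^(d+1)) := by
      rw [eq_div_iff hd1]
      have h1 := gP_succ q (m+d+1) m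
      have : gP q (m+d+1) m * (1 - q^(m+d+1) * (q^m)⁻¹) = (1 - q^(m+d+1)) * gP q (m+d) m := by
        rw [← h1]; exact e2
      calc gP q (m+d+1) m * (1 - q^(d+1))
          = gP q (m+d+1) m * (1 - q^(m+d+1) * (q^m)⁻¹) := by
            congr 2
            rw [show m+d+1 = m+(d+1) by omega, pow_add]
            field_simp
            ring
        _ = (1 - q^(m+d+1)) * gP q (m+d) m := this
    simp only [DD, aN, Nat.add_sub_cancel]
    rw [e1, e2, e3, hA, tri m, pow_add, pP_succ q (m+1), pP_succ q m]
    have hPm := (pP_pos hq0 hq1 m).ne'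
    have hf1 := (fac_pos hq0 hq1 m).ne'
    have hf2 := (fac_pos hq0 hq1 (m+1)).ne'
    have hf1' : (1:ℝ) - q * q^m ≠ 0 := by intro hc; apply hf1; linear_combination hc
    have hf2' : (1:ℝ) - q^2 * q^m ≠ 0 := by intro hc; apply hf2; linear_combination hc
    have hf3' : (1:ℝ) - q * q^(m+1) ≠ 0 := by intro hc; apply hf2; linear_combination hc
    field_simp
    ring
  · -- m = k+1
    subst h
    rw [DD_top hq (by omega : k+1 < k+2), DD_top hq (by omega : k < k+1+1)]
    have e1 : gP q (k+2) (k+1+1) = (1 - q^(k+1+1)) * gP q (k+1) (k+1) := gP_shift hq (k+1) (k+1)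
    simp only [DD, aN, Nat.add_sub_cancel]
    rw [e1, tri (k+1)]
    simp only [Nat.add_sub_cancel]
    rw [pow_add, pP_succ q (k+1+1), pP_succ q (k+1)]
    have hPk := (pP_pos hq0 hq1 (k+1)).ne'
    have hf1 := (fac_pos hq0 hq1 (k+1)).ne'
    have hf2 := (fac_pos hq0 hq1 (k+2)).ne'
    have hf1' : (1:ℝ) - q^2 * q^k ≠ 0 := by intro hc; apply hf1; linear_combination hc
    have hf2' : (1:ℝ) - q^3 * q^k ≠ 0 := by intro hc; apply hf2; linear_combination hc
    have hf3' : (1:ℝ) - q * q^(k+1+1) ≠ 0 := by intro hc; apply hf2; linear_combination hc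
    field_simp
    ring
  · -- k+1 < m
    rw [DD_top hq (by omega : k+2 < m+1), DD_top hq (by omega : k+1 < m+1),
      DD_top hq (by omega : k+1 < m), DD_top hq (by omega : k < m+1)]
    ring

lemma Lrec {q : ℝ} (hq0 : 0 < q) (hq1 : q < 1) (k : ℕ) (x : ℝ) :
    aN q (k+1) * qLaguerreMod q (k+2) x
      = (aN q (k+1) + q * aN q k - x) * qLaguerreMod q (k+1) x
        - q * aN q k * qLaguerreMod q k x := by
  have hq : q ≠ 0 := hq0.ne'
  have h1q : (1:ℝ) - q ≠ 0 := by linarith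
  rw [Lmod_eq_ext hq0 hq1 (k+2) (k+4) (by omega) x,
    Lmod_eq_ext hq0 hq1 (k+1) (k+4) (by omega) x,
    Lmod_eq_ext hq0 hq1 k (k+4) (by omega) x]
  have hshift : x * ∑ j ∈ Finset.range (k+4), DD q (k+1) j * x^j
      = ∑ j ∈ Finset.range (k+4), (if j = 0 then 0 else DD q (k+1) (j-1)) * x^j := by
    rw [Finset.mul_sum, Finset.sum_range_succ (fun j => x * (DD q (k+1) j * x^j)) (k+3),
      DD_top hq (by omega : k+1 < k+3), Finset.sum_range_succ'
        (fun j => (if j = 0 then 0 else DD q (k+1) (j-1)) * x^j) (k+3)]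
    simp only [Nat.succ_ne_zero, if_neg, Nat.add_sub_cancel, if_pos, zero_mul, mul_zero,
      add_zero, reduceIte, Nat.add_sub_cancel]
    apply Finset.sum_congr rfl
    intro j hj
    ring
  have hmain : aN q (k+1) * ∑ j ∈ Finset.range (k+4), DD q (k+2) j * x^j
      = ∑ j ∈ Finset.range (k+4),
          ((aN q (k+1) + q * aN q k) * (DD q (k+1) j * x^j)
            - (if j = 0 then 0 else DD q (k+1) (j-1)) * x^j
            - q * aN q k * (DD q k j * x^j)) := by
    rw [Finset.mul_sum]
    apply Finset.sum_congr rfl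
    intro j hj
    cases j with
    | zero =>
      simp only [DD_zero0 h1q, reduceIte, pow_zero]
      ring
    | succ m =>
      simp only [Nat.succ_ne_zero, if_neg, reduceIte, Nat.add_sub_cancel]
      linear_combination x^(m+1) * KEY hq0 hq1 k m
  rw [hmain, Finset.sum_sub_distrib, Finset.sum_sub_distrib, ← Finset.mul_sum,
    ← Finset.mul_sum, ← hshift]
  ring

lemma Lmod_zero {q : ℝ} (hq0 : 0 < q) (hq1 : q < 1) (x : ℝ) : qLaguerreMod q 0 x = 1 := by
  have h1q : (1:ℝ) - q ≠ 0 := by linarith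
  rw [Lmod_eq hq0 hq1]
  simp [DD_zero0 h1q]

lemma Lbase {q : ℝ} (hq0 : 0 < q) (hq1 : q < 1) (x : ℝ) :
    aN q 0 * qLaguerreMod q 1 x = aN q 0 - x := by
  have hq : q ≠ 0 := hq0.ne'
  have h1q : (1:ℝ) - q ≠ 0 := by linarith
  rw [Lmod_eq hq0 hq1]
  rw [Finset.sum_range_succ, Finset.sum_range_one, DD_zero0 h1q]
  have hD11 : aN q 0 * DD q 1 1 = -1 := by
    have hf1 : (1:ℝ) - q*q ≠ 0 := by nlinarith
    have hf1' : (1:ℝ) - q^2 ≠ 0 := by intro hc; apply hf1; linear_combination hc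
    simp only [DD, aN, gP, qPR, Finset.prod_range_succ, Finset.prod_range_zero,
      Nat.sub_self, Nat.mul_zero, Nat.zero_div, pow_zero, pow_one, inv_one, one_mul, mul_one]
    field_simp
    ring
  have expand : aN q 0 * (1 * x ^ 0 + DD q 1 1 * x ^ 1)
      = aN q 0 + (aN q 0 * DD q 1 1) * x := by ring
  rw [expand, hD11]
  ring







lemma aQ_eq {q : ℝ} (hq0 : 0 < q) (n : ℕ) : aQ q n = aN q n := by
  rw [aQ, aN, show -(2:ℝ) * ((n:ℝ)+1) = -((2*(n+1):ℕ):ℝ) by push_cast; ring,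
    Real.rpow_neg hq0.le, Real.rpow_natCast]
  rw [div_eq_mul_inv, mul_comm]

lemma aN_pos {q : ℝ} (hq0 : 0 < q) (hq1 : q < 1) (n : ℕ) : 0 < aN q n := by
  have h1 : q ^ (n+1) < 1 := pow_lt_one₀ hq0.le hq1 (Nat.succ_ne_zero n)
  have h2 : (0:ℝ) < q ^ (2*(n+1)) := pow_pos hq0 _
  rw [aN]
  exact div_pos (by linarith) h2

lemma Trec {q : ℝ} (hq0 : 0 < q) (hq1 : q < 1) (k : ℕ) (x : ℝ) :
    Real.sqrt q * aN q (k+1) * ((-1)^(k+2) * q ^ (-((k:ℝ)+2)/2) * qLaguerreMod q (k+2) x)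
      + (aN q (k+1) + q * aN q k - x) * ((-1)^(k+1) * q ^ (-((k:ℝ)+1)/2) * qLaguerreMod q (k+1) x)
      + Real.sqrt q * aN q k * ((-1)^k * q ^ (-(k:ℝ)/2) * qLaguerreMod q k x) = 0 := by
  have h1 : Real.sqrt q * q ^ (-((k:ℝ)+2)/2) = q ^ (-((k:ℝ)+1)/2) := by
    rw [Real.sqrt_eq_rpow, ← Real.rpow_add hq0]
    congr 1
    ring
  have h2 : Real.sqrt q * q ^ (-(k:ℝ)/2) = q * q ^ (-((k:ℝ)+1)/2) := by
    rw [Real.sqrt_eq_rpow, ← Real.rpow_add hq0,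
      show q * q ^ (-((k:ℝ)+1)/2) = q ^ ((1:ℝ) + -((k:ℝ)+1)/2) from by
        rw [Real.rpow_add hq0, Real.rpow_one]]
    congr 1
    ring
  have hR := Lrec hq0 hq1 k x
  linear_combination ((-1)^k * aN q (k+1) * qLaguerreMod q (k+2) x) * h1
    + ((-1)^k * aN q k * qLaguerreMod q k x) * h2
    + ((-1)^k * q ^ (-((k:ℝ)+1)/2)) * hR


/-- With `a_n = q^{−2(n+1)}(1−q^{n+1})` and `k = q^{1/2}` (so that
`α_n = q^{−2n−3/2}(1−q^{n+1})` and `β_n = q^{−2(n+1)}(1−q^{n+1}+q³(1−q^n))`), the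
orthonormal polynomials of the three-term recurrence satisfy
`P_n(x) = (−1)^n q^{−n/2} L̃_n(x;q)` for all `n`. -/
theorem statement18 (q : ℝ) (hq : q ∈ Set.Ioo (0 : ℝ) 1)
    (P : ℕ → ℝ → ℝ)
    (hP0 : ∀ x, P 0 x = 1)
    (hP1 : ∀ x, alph (aQ q) (Real.sqrt q) 0 * P 1 x
      + (bet (aQ q) (Real.sqrt q) 0 - x) * P 0 x = 0)
    (hPrec : ∀ n, 1 ≤ n → ∀ x,
      alph (aQ q) (Real.sqrt q) n * P (n + 1) x
        + (bet (aQ q) (Real.sqrt q) n - x) * P n x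
        + alph (aQ q) (Real.sqrt q) (n - 1) * P (n - 1) x = 0) :
    ∀ (n : ℕ) (x : ℝ), P n x = (-1 : ℝ) ^ n * q ^ (-(n : ℝ) / 2) * qLaguerreMod q n x := by
  obtain ⟨hq0, hq1⟩ := hq
  have hqne : q ≠ 0 := hq0.ne'
  have hsq : (0:ℝ) < Real.sqrt q := Real.sqrt_pos.mpr hq0
  have halph : ∀ m, alph (aQ q) (Real.sqrt q) m ≠ 0 := by
    intro m
    rw [alph, aQ_eq hq0]
    exact (mul_pos hsq (aN_pos hq0 hq1 m)).ne'
  set T : ℕ → ℝ → ℝ := fun n x => (-1 : ℝ) ^ n * q ^ (-(n : ℝ) / 2) * qLaguerreMod q n x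
    with hT
  have hT0 : ∀ x, T 0 x = 1 := by
    intro x
    simp [hT, Lmod_zero hq0 hq1]
  have hT1 : ∀ x, alph (aQ q) (Real.sqrt q) 0 * T 1 x
      + (bet (aQ q) (Real.sqrt q) 0 - x) * T 0 x = 0 := by
    intro x
    have hb : bet (aQ q) (Real.sqrt q) 0 = aN q 0 := by
      rw [bet, aQ_eq hq0]
    have hs1 : Real.sqrt q * q ^ (-((1:ℕ):ℝ)/2) = 1 := by
      rw [Real.sqrt_eq_rpow, ← Real.rpow_add hq0]
      norm_num
    have hL := Lbase hq0 hq1 x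
    rw [hT0, hb, alph, aQ_eq hq0]
    simp only [hT]
    push_cast
    push_cast at hs1
    linear_combination (-(aN q 0) * qLaguerreMod q 1 x) * hs1 - hL
  have hTrec : ∀ k x, alph (aQ q) (Real.sqrt q) (k+1) * T (k+2) x
      + (bet (aQ q) (Real.sqrt q) (k+1) - x) * T (k+1) x
      + alph (aQ q) (Real.sqrt q) k * T k x = 0 := by
    intro k x
    have hb : bet (aQ q) (Real.sqrt q) (k+1) = aN q (k+1) + q * aN q k := by
      rw [bet, aQ_eq hq0, aQ_eq hq0, Real.sq_sqrt hq0.le]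
    have := Trec hq0 hq1 k x
    rw [hb, alph, alph, aQ_eq hq0, aQ_eq hq0]
    simp only [hT]
    push_cast
    push_cast at this
    linear_combination this
  have main : ∀ n, (∀ x, P n x = T n x) ∧ (∀ x, P (n+1) x = T (n+1) x) := by
    intro n
    induction n with
    | zero =>
      constructor
      · intro x
        rw [hP0, hT0]
      · intro x
        have h1 := hP1 x
        have h2 := hT1 x
        rw [hP0] at h1
        rw [hT0] at h2
        have : alph (aQ q) (Real.sqrt q) 0 * P 1 x = alph (aQ q) (Real.sqrt q) 0 * T 1 x := by
          linarith
        exact mul_left_cancel₀ (halph 0) this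
    | succ k ih =>
      refine ⟨ih.2, ?_⟩
      intro x
      have h1 := hPrec (k+1) (by omega) x
      have h2 := hTrec k x
      simp only [Nat.add_sub_cancel] at h1
      rw [ih.1 x, ih.2 x] at h1
      have : alph (aQ q) (Real.sqrt q) (k+1) * P (k+1+1) x
          = alph (aQ q) (Real.sqrt q) (k+1) * T (k+2) x := by
        linarith
      exact mul_left_cancel₀ (halph (k+1)) this
  intro n x
  rw [(main n).1 x]
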